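/- For every m-partition λ of length n, the representation V_λ of H(m,1,n) is irreducible. -/

import Mathlib

/-- Generators of the cyclotomic Hecke algebra `H(m,1,n)`:
`tau` and `sig i` (representing `σ_{i+1}`) for `i : Fin (n-1)`. -/
inductive CycGen (n : ℕ) : Type
  | tau : CycGen n
  | sig : Fin (n - 1) → CycGen n

/-- The defining relations of the cyclotomic Hecke algebra `H(m,1,n)` with
parameters `q`, `qinv` (playing the role of `q⁻¹`) and `v : Fin m → R`. -/
inductive cycRel (R : Type) [CommRing R] (m n : ℕ) (q qinv : R) (v : Fin m → R) :
    FreeAlgebra R (CycGen n) → FreeAlgebra R (CycGen n) → Prop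
  | braid (i j : Fin (n - 1)) (h : (j : ℕ) = (i : ℕ) + 1) :
      cycRel R m n q qinv v
        (FreeAlgebra.ι R (CycGen.sig i) * FreeAlgebra.ι R (CycGen.sig j) *
          FreeAlgebra.ι R (CycGen.sig i))
        (FreeAlgebra.ι R (CycGen.sig j) * FreeAlgebra.ι R (CycGen.sig i) *
          FreeAlgebra.ι R (CycGen.sig j))
  | comm (i j : Fin (n - 1)) (h : (i : ℕ) + 1 < (j : ℕ)) :
      cycRel R m n q qinv v
        (FreeAlgebra.ι R (CycGen.sig i) * FreeAlgebra.ι R (CycGen.sig j))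
        (FreeAlgebra.ι R (CycGen.sig j) * FreeAlgebra.ι R (CycGen.sig i))
  | tauSigma (i : Fin (n - 1)) (h : (i : ℕ) = 0) :
      cycRel R m n q qinv v
        (FreeAlgebra.ι R CycGen.tau * FreeAlgebra.ι R (CycGen.sig i) *
          FreeAlgebra.ι R CycGen.tau * FreeAlgebra.ι R (CycGen.sig i))
        (FreeAlgebra.ι R (CycGen.sig i) * FreeAlgebra.ι R CycGen.tau *
          FreeAlgebra.ι R (CycGen.sig i) * FreeAlgebra.ι R CycGen.tau)
  | tauComm (i : Fin (n - 1)) (h : 0 < (i : ℕ)) :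
      cycRel R m n q qinv v
        (FreeAlgebra.ι R CycGen.tau * FreeAlgebra.ι R (CycGen.sig i))
        (FreeAlgebra.ι R (CycGen.sig i) * FreeAlgebra.ι R CycGen.tau)
  | quadratic (i : Fin (n - 1)) :
      cycRel R m n q qinv v
        (FreeAlgebra.ι R (CycGen.sig i) * FreeAlgebra.ι R (CycGen.sig i))
        ((q - qinv) • FreeAlgebra.ι R (CycGen.sig i) + 1)
  | cyclotomic :
      cycRel R m n q qinv v
        ((List.ofFn (fun k : Fin m =>
            FreeAlgebra.ι R CycGen.tau - algebraMap R (FreeAlgebra R (CycGen n)) (v k))).prod)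
        0

/-- The cyclotomic Hecke algebra `H(m,1,n)`. -/
abbrev CycHecke (R : Type) [CommRing R] (m n : ℕ) (q qinv : R) (v : Fin m → R) : Type :=
  RingQuot (cycRel R m n q qinv v)

variable (R : Type) [CommRing R] (m n : ℕ) (q qinv : R) (v : Fin m → R)

/-- The generator `τ` of `H(m,1,n)`. -/
noncomputable def tauH : CycHecke R m n q qinv v :=
  RingQuot.mkAlgHom R (cycRel R m n q qinv v) (FreeAlgebra.ι R CycGen.tau)

/-- The generator `σ_{i+1}` of `H(m,1,n)`, for `i : Fin (n-1)`. -/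
noncomputable def sigH (i : Fin (n - 1)) : CycHecke R m n q qinv v :=
  RingQuot.mkAlgHom R (cycRel R m n q qinv v) (FreeAlgebra.ι R (CycGen.sig i))

/-- The generator `σ_{k+1}` of `H(m,1,n)`, for `k : ℕ` (defined as `1` out of range). -/
noncomputable def sigN (k : ℕ) : CycHecke R m n q qinv v :=
  if h : k < n - 1 then sigH R m n q qinv v ⟨k, h⟩ else 1

/-- The inverse `σ_{k+1}⁻¹ = σ_{k+1} - (q - q⁻¹)` of the generator `σ_{k+1}`. -/
noncomputable def sigInvN (k : ℕ) : CycHecke R m n q qinv v :=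
  sigN R m n q qinv v k - algebraMap R (CycHecke R m n q qinv v) (q - qinv)

/-- `leftW j = σ_j⁻¹ σ_{j-1}⁻¹ ⋯ σ_1⁻¹` (with `leftW 0 = 1`). -/
noncomputable def leftW : ℕ → CycHecke R m n q qinv v
  | 0 => 1
  | j + 1 => sigInvN R m n q qinv v j * leftW j

/-- `rW k = σ_1 σ_2 ⋯ σ_k` (with `rW 0 = 1`). -/
noncomputable def rW : ℕ → CycHecke R m n q qinv v
  | 0 => 1
  | k + 1 => rW k * sigN R m n q qinv v k

/-- The Jucys–Murphy elements: `JM k` is the element `J_{k+1}` of the paper, so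
`JM 0 = τ` and `JM (k+1) = σ_{k+1} (JM k) σ_{k+1}`. -/
noncomputable def JM : ℕ → CycHecke R m n q qinv v
  | 0 => tauH R m n q qinv v
  | k + 1 => sigN R m n q qinv v k * JM k * sigN R m n q qinv v k
/-- The semisimplicity conditions (together with `q ≠ 0`, `v k ≠ 0`) on the
parameters: `1 + q² + ⋯ + q^{2N} ≠ 0` for `0 < N < n`, and `q^{2i} v_j ≠ v_k`
for `j ≠ k` and `-n < i < n`. -/
def SSParams (m n : ℕ) (q : ℂ) (v : Fin m → ℂ) : Prop :=
  (∀ N : ℕ, 0 < N → N < n → ∑ k ∈ Finset.range (N + 1), q ^ (2 * k) ≠ 0) ∧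
  (∀ j k : Fin m, j ≠ k → ∀ i : ℤ, -(n : ℤ) < i → i < (n : ℤ) → q ^ (2 * i) * v j ≠ v k)

/-- A subspace `W` is invariant under an endomorphism `f`. -/
def Invt {V : Type} [AddCommGroup V] [Module ℂ V] (f : Module.End ℂ V)
    (W : Submodule ℂ V) : Prop :=
  ∀ x ∈ W, f x ∈ W

/-- A `C`-representation of `H(m,1,n)`: the Jucys–Murphy elements `J_1,…,J_n`
act by diagonalizable operators, and for every `i = 1,…,n-1` the representation
space is completely reducible over the subalgebra generated by `J_i, J_{i+1}, σ_i`
(every invariant subspace has an invariant complement). -/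
def IsCRep (m n : ℕ) (q : ℂ) (v : Fin m → ℂ) {V : Type} [AddCommGroup V] [Module ℂ V]
    (ρ : CycHecke ℂ m n q q⁻¹ v →ₐ[ℂ] Module.End ℂ V) : Prop :=
  (∀ i < n, ⨆ μ : ℂ, (ρ (JM ℂ m n q q⁻¹ v i)).eigenspace μ = ⊤) ∧
  ∀ i : ℕ, i + 1 < n → ∀ W : Submodule ℂ V,
    Invt (ρ (JM ℂ m n q q⁻¹ v i)) W → Invt (ρ (JM ℂ m n q q⁻¹ v (i + 1))) W →
    Invt (ρ (sigN ℂ m n q q⁻¹ v i)) W →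
    ∃ W' : Submodule ℂ V, IsCompl W W' ∧ Invt (ρ (JM ℂ m n q q⁻¹ v i)) W' ∧
      Invt (ρ (JM ℂ m n q q⁻¹ v (i + 1))) W' ∧ Invt (ρ (sigN ℂ m n q q⁻¹ v i)) W'
/-- A standard Young `m`-tableau with `n` nodes, encoded as the map sending the
entry `i` (0-based: `i` stands for the number `i+1`) to its node `(k, r, s)`
(diagram `k`, row `r`, column `s`, all 0-based). The conditions: the filling is
injective, and for each node all nodes to its left in its row and all nodes
above it in its column are occupied by smaller entries. This holds if and only
if the occupied nodes form an `m`-tuple of Young diagrams of total size `n` and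
the entries increase along the rows and columns of every diagram. -/
def IsStdTab (m n : ℕ) (T : Fin n → Fin m × ℕ × ℕ) : Prop :=
  Function.Injective T ∧
  ∀ i : Fin n,
    (∀ s' < (T i).2.2, ∃ j : Fin n, j < i ∧ T j = ((T i).1, (T i).2.1, s')) ∧
    (∀ r' < (T i).2.1, ∃ j : Fin n, j < i ∧ T j = ((T i).1, r', (T i).2.2))

/-- The content `c(T|i) = v_k q^{2(s-r)}` of the node of `T` containing the
entry `i` (in row `r` and column `s` of the `k`-th diagram). -/
noncomputable def tabContent (m n : ℕ) (q : ℂ) (v : Fin m → ℂ)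
    (T : Fin n → Fin m × ℕ × ℕ) (i : Fin n) : ℂ :=
  v (T i).1 * q ^ (2 * (((T i).2.2 : ℤ) - ((T i).2.1 : ℤ)))
/-- The type of standard `m`-tableaux of shape `S` (where the shape is recorded
as the set `S` of occupied nodes). -/
def Tab (m n : ℕ) (S : Set (Fin m × ℕ × ℕ)) : Type :=
  {T : Fin n → Fin m × ℕ × ℕ // IsStdTab m n T ∧ Set.range T = S}

open Classical in
/-- A representation of `H(m,1,n)` on the vector space `V_λ` with basis the
standard `m`-tableaux of shape `S` is given by the formulas of the paper:
`τ · X = c(X|1) X` and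
`σ_i · X = -(q-q⁻¹) c(X|i+1)/(c(X|i) - c(X|i+1)) X
          + (q c(X|i+1) - q⁻¹ c(X|i))/(c(X|i+1) - c(X|i)) X s_i`,
where `X s_i` is `X` with the entries `i` and `i+1` exchanged, interpreted as
`0` if it is not standard. -/
def IsTabRep (m n : ℕ) (q : ℂ) (v : Fin m → ℂ) (S : Set (Fin m × ℕ × ℕ))
    (ρ : CycHecke ℂ m n q q⁻¹ v →ₐ[ℂ] Module.End ℂ (Tab m n S →₀ ℂ)) : Prop :=
  (∀ (T : Tab m n S) (h0 : 0 < n),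
    ρ (tauH ℂ m n q q⁻¹ v) (Finsupp.single T 1) =
      tabContent m n q v T.1 ⟨0, h0⟩ • Finsupp.single T 1) ∧
  (∀ (T : Tab m n S) (i : ℕ) (h : i + 1 < n),
    ρ (sigN ℂ m n q q⁻¹ v i) (Finsupp.single T 1) =
      (-((q - q⁻¹) * tabContent m n q v T.1 ⟨i + 1, h⟩ /
          (tabContent m n q v T.1 ⟨i, by omega⟩ - tabContent m n q v T.1 ⟨i + 1, h⟩))) •
        Finsupp.single T 1 +
      ((q * tabContent m n q v T.1 ⟨i + 1, h⟩ - q⁻¹ * tabContent m n q v T.1 ⟨i, by omega⟩) /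
          (tabContent m n q v T.1 ⟨i + 1, h⟩ - tabContent m n q v T.1 ⟨i, by omega⟩)) •
        (if hstd : IsStdTab m n (T.1 ∘ Equiv.swap ⟨i, by omega⟩ ⟨i + 1, h⟩)
         then Finsupp.single
            (⟨T.1 ∘ Equiv.swap ⟨i, by omega⟩ ⟨i + 1, h⟩, hstd, by
              rw [Set.range_comp, Equiv.range_eq_univ, Set.image_univ]
              exact T.2.2⟩ : Tab m n S) 1
         else 0))

section Comb
variable {m n : ℕ} {T : Fin n → Fin m × ℕ × ℕ}

/-- Entries increase along rows: a node strictly to the left has a smaller entry. -/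
lemma std_row_lt (hT : IsStdTab m n T) {i j : Fin n}
    (h1 : (T j).1 = (T i).1) (h2 : (T j).2.1 = (T i).2.1) (h3 : (T j).2.2 < (T i).2.2) :
    j < i := by
  obtain ⟨j', hj', hTj'⟩ := (hT.2 i).1 _ h3
  have : T j = T j' := by
    rw [hTj']
    exact Prod.ext h1 (Prod.ext h2 rfl)
  rwa [hT.1 this]

/-- Entries increase along columns. -/
lemma std_col_lt (hT : IsStdTab m n T) {i j : Fin n}
    (h1 : (T j).1 = (T i).1) (h2 : (T j).2.2 = (T i).2.2) (h3 : (T j).2.1 < (T i).2.1) :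
    j < i := by
  obtain ⟨j', hj', hTj'⟩ := (hT.2 i).2 _ h3
  have : T j = T j' := by
    rw [hTj']
    exact Prod.ext h1 (Prod.ext rfl h2)
  rwa [hT.1 this]

lemma std_row_mem (hT : IsStdTab m n T) (i : Fin n) {σ : ℕ} (hσ : σ ≤ (T i).2.2) :
    ((T i).1, (T i).2.1, σ) ∈ Set.range T := by
  rcases eq_or_lt_of_le hσ with h | h
  · exact ⟨i, by rw [h]⟩
  · obtain ⟨j, _, hj⟩ := (hT.2 i).1 _ h
    exact ⟨j, hj⟩

lemma std_col_mem (hT : IsStdTab m n T) (i : Fin n) {ρ : ℕ} (hρ : ρ ≤ (T i).2.1) :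
    ((T i).1, ρ, (T i).2.2) ∈ Set.range T := by
  rcases eq_or_lt_of_le hρ with h | h
  · exact ⟨i, by rw [h]⟩
  · obtain ⟨j, _, hj⟩ := (hT.2 i).2 _ h
    exact ⟨j, hj⟩

/-- Counting bound: row of `a` plus column of `b`. -/
lemma count_bound (hT : IsStdTab m n T) {a b : Fin m × ℕ × ℕ}
    (ha : a ∈ Set.range T) (hb : b ∈ Set.range T) :
    a.2.2 + b.2.1 + (if a.1 = b.1 then 1 else 2) ≤ n := by
  classical
  obtain ⟨ia, hia⟩ := ha
  obtain ⟨ib, hib⟩ := hb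
  set Frow : Finset (Fin m × ℕ × ℕ) :=
    (Finset.range (a.2.2 + 1)).image (fun σ => (a.1, a.2.1, σ)) with hFrow
  set Fcol : Finset (Fin m × ℕ × ℕ) :=
    (Finset.range (b.2.1 + 1)).image (fun ρ => (b.1, ρ, b.2.2)) with hFcol
  have hrowcard : Frow.card = a.2.2 + 1 := by
    rw [hFrow, Finset.card_image_of_injective _ (fun x y hxy => by
      simpa using hxy), Finset.card_range]
  have hcolcard : Fcol.card = b.2.1 + 1 := by
    rw [hFcol, Finset.card_image_of_injective _ (fun x y hxy => by
      simpa using hxy), Finset.card_range]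
  have hsub : Frow ∪ Fcol ⊆ Finset.image T Finset.univ := by
    intro x hx
    rw [Finset.mem_union] at hx
    have hxmem : x ∈ Set.range T := by
      rcases hx with hx | hx
      · rw [hFrow, Finset.mem_image] at hx
        obtain ⟨σ, hσ, rfl⟩ := hx
        rw [Finset.mem_range] at hσ
        have := std_row_mem hT ia (σ := σ) (by rw [hia]; omega)
        rwa [hia] at this
      · rw [hFcol, Finset.mem_image] at hx
        obtain ⟨ρ, hρ, rfl⟩ := hx
        rw [Finset.mem_range] at hρ
        have := std_col_mem hT ib (ρ := ρ) (by rw [hib]; omega)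
        rwa [hib] at this
    obtain ⟨j, hj⟩ := hxmem
    exact Finset.mem_image.2 ⟨j, Finset.mem_univ _, hj⟩
  have hcard1 : (Frow ∪ Fcol).card ≤ n := by
    calc (Frow ∪ Fcol).card ≤ (Finset.image T Finset.univ).card :=
          Finset.card_le_card hsub
      _ ≤ Finset.univ.card := Finset.card_image_le
      _ = n := by simp
  have hinter : (Frow ∩ Fcol).card ≤ if a.1 = b.1 then 1 else 0 := by
    split_ifs with hab
    · have : Frow ∩ Fcol ⊆ {(a.1, a.2.1, b.2.2)} := by
        intro x hx
        rw [Finset.mem_inter, hFrow, hFcol, Finset.mem_image, Finset.mem_image] at hx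
        obtain ⟨⟨σ, _, rfl⟩, ⟨ρ, _, hx2⟩⟩ := hx
        simp only [Prod.mk.injEq] at hx2
        simp [← hx2.2.2]
      calc (Frow ∩ Fcol).card ≤ _ := Finset.card_le_card this
        _ = 1 := Finset.card_singleton _
    · have : (Frow ∩ Fcol).card = 0 := by
        rw [Finset.card_eq_zero, Finset.eq_empty_iff_forall_notMem]
        intro x hx
        rw [Finset.mem_inter, hFrow, hFcol, Finset.mem_image, Finset.mem_image] at hx
        obtain ⟨⟨σ, _, rfl⟩, ⟨ρ, _, hx2⟩⟩ := hx
        simp only [Prod.mk.injEq] at hx2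
        exact hab hx2.1.symm
      omega
  have := Finset.card_union_add_card_inter Frow Fcol
  split_ifs with hab <;> split_ifs at hinter <;> omega

end Comb
section Comb2
variable {m n : ℕ} {T : Fin n → Fin m × ℕ × ℕ}

lemma swap_std (hT : IsStdTab m n T) {i i1 : Fin n} (hii : (i1 : ℕ) = (i : ℕ) + 1)
    (hrow : T i1 ≠ ((T i).1, (T i).2.1, (T i).2.2 + 1))
    (hcol : T i1 ≠ ((T i).1, (T i).2.1 + 1, (T i).2.2)) :
    IsStdTab m n (T ∘ Equiv.swap i i1) := by
  have hi_lt : i < i1 := by rw [Fin.lt_def]; omega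
  have hii1 : i ≠ i1 := ne_of_lt hi_lt
  -- `T i` is not a strict predecessor of `T i1`
  have hnotpred : ¬((T i).1 = (T i1).1 ∧
      (((T i).2.1 = (T i1).2.1 ∧ (T i).2.2 < (T i1).2.2) ∨
       ((T i).2.2 = (T i1).2.2 ∧ (T i).2.1 < (T i1).2.1))) := by
    rintro ⟨hk, hcase | hcase⟩
    · rcases Nat.lt_or_ge ((T i).2.2 + 1) ((T i1).2.2) with hlt | hge
      · obtain ⟨j, hj, hTj⟩ := (hT.2 i1).1 ((T i1).2.2 - 1) (by omega)
        have hji : j ≠ i := by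
          intro h; subst h
          have : (T j).2.2 = (T i1).2.2 - 1 := by rw [hTj]
          omega
        have hjlt : j < i := by
          rw [Fin.lt_def] at hj ⊢
          have : (j : ℕ) ≠ i := fun h => hji (Fin.ext h)
          omega
        have : i < j := std_row_lt hT (i := j) (j := i)
          (by rw [hTj, ← hk]) (by rw [hTj, ← hcase.1]) (by rw [hTj]; dsimp; omega)
        exact absurd hjlt (by rw [not_lt]; exact le_of_lt this)
      · have : (T i1).2.2 = (T i).2.2 + 1 := by omega
        exact hrow (Prod.ext hk.symm (Prod.ext hcase.1.symm this))
    · rcases Nat.lt_or_ge ((T i).2.1 + 1) ((T i1).2.1) with hlt | hge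
      · obtain ⟨j, hj, hTj⟩ := (hT.2 i1).2 ((T i1).2.1 - 1) (by omega)
        have hji : j ≠ i := by
          intro h; subst h
          have : (T j).2.1 = (T i1).2.1 - 1 := by rw [hTj]
          omega
        have hjlt : j < i := by
          rw [Fin.lt_def] at hj ⊢
          have : (j : ℕ) ≠ i := fun h => hji (Fin.ext h)
          omega
        have : i < j := std_col_lt hT (i := j) (j := i)
          (by rw [hTj, ← hk]) (by rw [hTj, ← hcase.1]) (by rw [hTj]; dsimp; omega)
        exact absurd hjlt (by rw [not_lt]; exact le_of_lt this)
      · have : (T i1).2.1 = (T i).2.1 + 1 := by omega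
        exact hcol (Prod.ext hk.symm (Prod.ext this hcase.1.symm))
  have key : ∀ (l j0 : Fin n), j0 < Equiv.swap i i1 l → (l = i → j0 ≠ i) →
      Equiv.swap i i1 j0 < l := by
    intro l j0 hj0 hne
    by_cases hl : l = i
    · rw [hl, Equiv.swap_apply_left] at hj0
      have hj0i : j0 ≠ i := hne hl
      have h2 : (j0 : ℕ) ≠ (i : ℕ) := fun h => hj0i (Fin.ext h)
      have h1 : (j0 : ℕ) < (i1 : ℕ) := hj0
      have hj0i1 : j0 ≠ i1 := fun h => by rw [h] at h2; omega
      rw [Equiv.swap_apply_of_ne_of_ne hj0i hj0i1, hl, Fin.lt_def]; omega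
    · by_cases hl1 : l = i1
      · rw [hl1, Equiv.swap_apply_right] at hj0
        have h1 : (j0 : ℕ) < (i : ℕ) := hj0
        have hj0i : j0 ≠ i := ne_of_lt hj0
        have hj0i1 : j0 ≠ i1 := fun h => by rw [h] at h1; omega
        rw [Equiv.swap_apply_of_ne_of_ne hj0i hj0i1, hl1, Fin.lt_def]; omega
      · rw [Equiv.swap_apply_of_ne_of_ne hl hl1] at hj0
        have h1 : (j0 : ℕ) < (l : ℕ) := hj0
        have hlv : (l : ℕ) ≠ (i : ℕ) := fun h => hl (Fin.ext h)
        have hlv1 : (l : ℕ) ≠ (i1 : ℕ) := fun h => hl1 (Fin.ext h)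
        by_cases hj0i : j0 = i
        · subst hj0i; rw [Equiv.swap_apply_left, Fin.lt_def]; omega
        · by_cases hj0i1 : j0 = i1
          · subst hj0i1; rw [Equiv.swap_apply_right, Fin.lt_def]; omega
          · rw [Equiv.swap_apply_of_ne_of_ne hj0i hj0i1, Fin.lt_def]; omega
  refine ⟨hT.1.comp (Equiv.swap i i1).injective, fun l => ⟨?_, ?_⟩⟩
  · intro s' hs'
    simp only [Function.comp_apply] at hs' ⊢
    obtain ⟨j0, hj0, hTj0⟩ := (hT.2 (Equiv.swap i i1 l)).1 s' hs'
    refine ⟨Equiv.swap i i1 j0, key l j0 hj0 ?_, by rw [Equiv.swap_apply_self]; exact hTj0⟩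
    intro hl hj0i
    rw [hl] at hj0 hs' hTj0
    rw [hj0i] at hTj0
    rw [Equiv.swap_apply_left] at hTj0 hs' hj0
    exact hnotpred ⟨by rw [hTj0], Or.inl ⟨by rw [hTj0], by rw [hTj0]; exact hs'⟩⟩
  · intro r' hr'
    simp only [Function.comp_apply] at hr' ⊢
    obtain ⟨j0, hj0, hTj0⟩ := (hT.2 (Equiv.swap i i1 l)).2 r' hr'
    refine ⟨Equiv.swap i i1 j0, key l j0 hj0 ?_, by rw [Equiv.swap_apply_self]; exact hTj0⟩
    intro hl hj0i
    rw [hl] at hj0 hr' hTj0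
    rw [hj0i] at hTj0
    rw [Equiv.swap_apply_left] at hTj0 hr' hj0
    exact hnotpred ⟨by rw [hTj0], Or.inr ⟨by rw [hTj0], by rw [hTj0]; exact hr'⟩⟩

end Comb2
section Comb3
variable {m n : ℕ} {T : Fin n → Fin m × ℕ × ℕ}

lemma diag_ne (hT : IsStdTab m n T) {i i1 : Fin n} (hii : (i1 : ℕ) = (i : ℕ) + 1)
    (hT' : IsStdTab m n (T ∘ Equiv.swap i i1)) (hk : (T i1).1 = (T i).1) :
    ((T i1).2.2 : ℤ) - ((T i1).2.1 : ℤ) ≠ ((T i).2.2 : ℤ) - ((T i).2.1 : ℤ) - 1 := by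
  intro hdiag
  have hi_lt : i < i1 := by rw [Fin.lt_def]; omega
  rcases lt_trichotomy (T i1).2.1 (T i).2.1 with hr | hr | hr
  · -- b in an earlier row
    have hs : (T i1).2.2 < (T i).2.2 := by omega
    obtain ⟨jx, hjx⟩ := std_col_mem hT i (le_of_lt hr)
    have h1 : jx < i := std_col_lt hT (i := i) (j := jx)
      (by rw [hjx]) (by rw [hjx]) (by rw [hjx]; exact hr)
    have h2 : i1 < jx := std_row_lt hT (i := jx) (j := i1)
      (by rw [hjx]; exact hk) (by rw [hjx]) (by rw [hjx]; exact hs)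
    rw [Fin.lt_def] at h1 h2
    omega
  · -- same row: b strictly to the left of a
    have hs : (T i1).2.2 < (T i).2.2 := by omega
    have : i1 < i := std_row_lt hT (i := i) (j := i1) hk hr hs
    rw [Fin.lt_def] at this
    omega
  · rcases eq_or_lt_of_le (show (T i).2.2 ≤ (T i1).2.2 by omega) with hs | hs
    · -- same column: b directly below a
      have hr1 : (T i1).2.1 = (T i).2.1 + 1 := by omega
      have key : i1 < i := by
        refine std_col_lt hT' (i := i) (j := i1) ?_ ?_ ?_ <;>
          simp only [Function.comp_apply, Equiv.swap_apply_left, Equiv.swap_apply_right]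
        · exact hk.symm
        · exact hs
        · omega
      rw [Fin.lt_def] at key
      omega
    · -- generic case: s' > s, r' > r
      obtain ⟨jx, hjx⟩ := std_col_mem hT i1 (le_of_lt hr)
      have h1 : i < jx := std_row_lt hT (i := jx) (j := i)
        (by rw [hjx]; exact hk.symm) (by rw [hjx]) (by rw [hjx]; exact hs)
      have h2 : jx < i1 := std_col_lt hT (i := i1) (j := jx)
        (by rw [hjx]) (by rw [hjx]) (by rw [hjx]; exact hr)
      rw [Fin.lt_def] at h1 h2
      omega

end Comb3
section Alg1
variable {m n : ℕ} {q : ℂ} {v : Fin m → ℂ} {S : Set (Fin m × ℕ × ℕ)}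
variable {ρ : CycHecke ℂ m n q q⁻¹ v →ₐ[ℂ] Module.End ℂ (Tab m n S →₀ ℂ)}

lemma sig_sq (i : Fin (n - 1)) :
    sigH ℂ m n q q⁻¹ v i * sigH ℂ m n q q⁻¹ v i
      = (q - q⁻¹) • sigH ℂ m n q q⁻¹ v i + 1 := by
  have h := RingQuot.mkAlgHom_rel ℂ
    (cycRel.quadratic (R := ℂ) (m := m) (n := n) (q := q) (qinv := q⁻¹) (v := v) i)
  simpa [sigH, map_mul, map_add, map_smul, map_one] using h

lemma content_adj_ne (hρ : IsTabRep m n q v S ρ) (T : Tab m n S) (i : ℕ) (h : i + 1 < n) :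
    tabContent m n q v T.1 ⟨i, by omega⟩ ≠ tabContent m n q v T.1 ⟨i + 1, h⟩ := by
  intro heq
  have hf := hρ.2 T i h
  rw [heq, sub_self, div_zero, div_zero, neg_zero] at hf
  simp only [zero_smul, zero_add] at hf
  replace hf : ρ (sigN ℂ m n q q⁻¹ v i) (Finsupp.single T 1) = 0 := by
    rw [hf]; exact zero_smul ℂ _
  have hlt : i < n - 1 := by omega
  have hsig : sigN ℂ m n q q⁻¹ v i = sigH ℂ m n q q⁻¹ v ⟨i, hlt⟩ := by
    rw [sigN, dif_pos hlt]
  have hrel := sig_sq (m := m) (n := n) (q := q) (v := v) ⟨i, hlt⟩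
  have happ := congrArg (fun (f : Module.End ℂ (Tab m n S →₀ ℂ)) =>
    f (Finsupp.single T (1 : ℂ))) (congrArg ρ hrel)
  simp only [map_mul, map_add, map_smul, map_one, Module.End.mul_apply, LinearMap.add_apply,
    LinearMap.smul_apply, Module.End.one_apply] at happ
  rw [← hsig, hf, map_zero, smul_zero, zero_add] at happ
  exact one_ne_zero (Finsupp.single_eq_zero.mp happ.symm)

end Alg1
section Alg2
variable {m n : ℕ} {q : ℂ} {v : Fin m → ℂ} {S : Set (Fin m × ℕ × ℕ)}
variable {ρ : CycHecke ℂ m n q q⁻¹ v →ₐ[ℂ] Module.End ℂ (Tab m n S →₀ ℂ)}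

lemma qpow_ne_one
    (hss1 : ∀ N : ℕ, 0 < N → N < n → ∑ k ∈ Finset.range (N + 1), q ^ (2 * k) ≠ 0)
    (hq2 : q ^ (2 : ℕ) ≠ 1) {N : ℕ} (h0 : 0 < N) (hN : N ≤ n) : q ^ (2 * N) ≠ 1 := by
  intro hone
  rcases Nat.lt_or_ge N 2 with h2 | h2
  · have : N = 1 := by omega
    rw [this, mul_one] at hone
    exact hq2 hone
  · have hsum : ∑ k ∈ Finset.range ((N - 1) + 1), q ^ (2 * k) = 0 := by
      have hNN : N - 1 + 1 = N := by omega
      rw [hNN, Finset.sum_congr rfl (fun k _ => by rw [pow_mul]), geom_sum_eq hq2,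
        ← pow_mul, hone, sub_self, zero_div]
    exact hss1 (N - 1) (by omega) (by omega) hsum

lemma qzpow_ne_one
    (hss1 : ∀ N : ℕ, 0 < N → N < n → ∑ k ∈ Finset.range (N + 1), q ^ (2 * k) ≠ 0)
    (hq2 : q ^ (2 : ℕ) ≠ 1) {M : ℤ} (h0 : M ≠ 0) (hN : M.natAbs ≤ n) : q ^ (2 * M) ≠ 1 := by
  intro hone
  have hnat : q ^ (2 * M.natAbs) = 1 := by
    rcases Int.natAbs_eq M with h | h
    · rw [← zpow_natCast]
      have hc : ((2 * M.natAbs : ℕ) : ℤ) = 2 * M := by omega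
      rw [hc]; exact hone
    · rw [← zpow_natCast]
      have hc : ((2 * M.natAbs : ℕ) : ℤ) = -(2 * M) := by omega
      rw [hc, zpow_neg, inv_eq_one]; exact hone
  exact qpow_ne_one hss1 hq2 (by omega) hN hnat

lemma content_of_q2 (hq2 : q ^ (2 : ℕ) = 1) (T : Fin n → Fin m × ℕ × ℕ) (i : Fin n) :
    tabContent m n q v T i = v (T i).1 := by
  unfold tabContent
  rw [zpow_mul]
  have h2 : q ^ (2 : ℤ) = 1 := by
    rw [show (2 : ℤ) = ((2 : ℕ) : ℤ) by norm_num, zpow_natCast, hq2]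
  rw [h2, one_zpow, mul_one]

lemma q_sq_ne_one (hρ : IsTabRep m n q v S ρ) (T₀ : Tab m n S)
    {a b : Fin m × ℕ × ℕ} (ha : a ∈ S) (hb : b ∈ S) (hab : a ≠ b) (hk : a.1 = b.1) :
    q ^ (2 : ℕ) ≠ 1 := by
  intro hq2
  have claim : ∀ g : ℕ, 0 < g → ∀ (T : Tab m n S) (ia ib : Fin n),
      (ib : ℕ) = (ia : ℕ) + g → (T.1 ib).1 = (T.1 ia).1 → False := by
    intro g
    induction g using Nat.strong_induction_on with
    | _ g IH =>
      intro hg T ia ib hgap hkk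
      by_cases hmid : ∃ j : Fin n, (ia : ℕ) < (j : ℕ) ∧ (j : ℕ) < (ib : ℕ) ∧
          (T.1 j).1 = (T.1 ia).1
      · obtain ⟨j, hj1, hj2, hj3⟩ := hmid
        exact IH ((j : ℕ) - (ia : ℕ)) (by omega) (by omega) T ia j (by omega) hj3
      · rcases Nat.eq_or_lt_of_le hg with h1 | h2
        · -- gap 1 : adjacent entries in the same diagram, equal contents
          have hlt : (ia : ℕ) + 1 < n := by have := ib.isLt; omega
          have hib : ib = ⟨(ia : ℕ) + 1, hlt⟩ := Fin.ext (show (ib : ℕ) = (ia : ℕ) + 1 by omega)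
          refine content_adj_ne hρ T ia hlt ?_
          rw [content_of_q2 hq2, content_of_q2 hq2]
          have : (⟨(ia : ℕ) + 1, hlt⟩ : Fin n) = ib := hib.symm
          rw [this, hkk]
        · -- gap ≥ 2 : swap the last two to reduce the gap
          have hjblt : (ia : ℕ) + g - 1 < n := by have := ib.isLt; omega
          set jb : Fin n := ⟨(ia : ℕ) + g - 1, hjblt⟩ with hjb
          have hgap2 : (ib : ℕ) = (jb : ℕ) + 1 := by simp [hjb]; omega
          have hjbne : (T.1 jb).1 ≠ (T.1 ia).1 := by
            intro h
            exact hmid ⟨jb, by simp [hjb]; omega, by simp [hjb]; omega, h⟩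
          have hibne : (T.1 ib).1 ≠ (T.1 jb).1 := by rw [hkk]; exact fun h => hjbne h.symm
          have hstd : IsStdTab m n (T.1 ∘ Equiv.swap jb ib) := by
            refine swap_std T.2.1 hgap2 ?_ ?_
            · intro h; exact hibne (by rw [h])
            · intro h; exact hibne (by rw [h])
          set T' : Tab m n S := ⟨T.1 ∘ Equiv.swap jb ib, hstd, by
            rw [Set.range_comp, Equiv.range_eq_univ, Set.image_univ]; exact T.2.2⟩ with hT'
          refine IH (g - 1) (by omega) (by omega) T' ia jb (by simp [hjb]; omega) ?_
          show (T.1 (Equiv.swap jb ib jb)).1 = (T.1 (Equiv.swap jb ib ia)).1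
          have hne1 : ia ≠ jb := by
            intro h; rw [h] at hgap; simp [hjb] at hgap; omega
          have hne2 : ia ≠ ib := by
            intro h; rw [← h] at hgap; omega
          rw [Equiv.swap_apply_left, Equiv.swap_apply_of_ne_of_ne hne1 hne2]
          exact hkk
  obtain ⟨ia, hia⟩ : a ∈ Set.range T₀.1 := by rw [T₀.2.2]; exact ha
  obtain ⟨ib, hib⟩ : b ∈ Set.range T₀.1 := by rw [T₀.2.2]; exact hb
  have hne : (ia : ℕ) ≠ (ib : ℕ) := by
    intro h
    exact hab (by rw [← hia, ← hib, Fin.ext h])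
  rcases Nat.lt_or_ge (ia : ℕ) (ib : ℕ) with h | h
  · exact claim ((ib : ℕ) - ia) (by omega) T₀ ia ib (by omega)
      (by rw [hia, hib, hk])
  · exact claim ((ia : ℕ) - ib) (by omega) T₀ ib ia (by omega)
      (by rw [hia, hib, hk])

end Alg2
section Alg3
variable {m n : ℕ} {q : ℂ} {v : Fin m → ℂ} {S : Set (Fin m × ℕ × ℕ)}
variable {ρ : CycHecke ℂ m n q q⁻¹ v →ₐ[ℂ] Module.End ℂ (Tab m n S →₀ ℂ)}

lemma content_shift (hq : q ≠ 0) {x y : ℂ} {da db : ℤ} (h : x * q ^ (2 * da) = y * q ^ (2 * db)) :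
    q ^ (2 * (da - db)) * x = y := by
  have h1 : q ^ (2 * db) ≠ 0 := zpow_ne_zero _ hq
  have h2 : q ^ (2 * (da - db)) = q ^ (2 * da) * (q ^ (2 * db))⁻¹ := by
    rw [← zpow_neg, ← zpow_add₀ hq]
    ring_nf
  rw [h2]
  field_simp
  linear_combination h

lemma content_sep (hq : q ≠ 0) (hv : ∀ k, v k ≠ 0) (hss : SSParams m n q v)
    (hρ : IsTabRep m n q v S ρ) (T U : Tab m n S) (hTU : T ≠ U) :
    ∃ i : Fin n, tabContent m n q v T.1 i ≠ tabContent m n q v U.1 i := by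
  classical
  by_contra hcon
  push_neg at hcon
  apply hTU
  apply Subtype.ext
  by_contra hfne
  have hne : ∃ i, T.1 i ≠ U.1 i := by
    by_contra hc; push_neg at hc; exact hfne (funext hc)
  set F := Finset.univ.filter (fun i => T.1 i ≠ U.1 i) with hF
  have hFne : F.Nonempty := by
    obtain ⟨i, hi⟩ := hne; exact ⟨i, by simp [hF, hi]⟩
  set i := F.min' hFne with hidef
  have hi : T.1 i ≠ U.1 i := by
    have hmem := F.min'_mem hFne
    exact (Finset.mem_filter.mp hmem).2
  have hmin : ∀ j : Fin n, j < i → T.1 j = U.1 j := by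
    intro j hj
    by_contra hc
    exact absurd hj (not_lt.mpr (F.min'_le j (Finset.mem_filter.mpr ⟨Finset.mem_univ _, hc⟩)))
  have hcc : v (T.1 i).1 * q ^ (2 * (((T.1 i).2.2 : ℤ) - ((T.1 i).2.1 : ℤ)))
      = v (U.1 i).1 * q ^ (2 * (((U.1 i).2.2 : ℤ) - ((U.1 i).2.1 : ℤ))) := hcon i
  have hshift := content_shift hq hcc
  have haS : T.1 i ∈ Set.range T.1 := ⟨i, rfl⟩
  have hbS : U.1 i ∈ Set.range T.1 :=
    (Set.ext_iff.mp T.2.2 _).mpr ((Set.ext_iff.mp U.2.2 _).mp ⟨i, rfl⟩)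
  by_cases hk : (T.1 i).1 = (U.1 i).1
  · by_cases hd : ((T.1 i).2.2 : ℤ) - ((T.1 i).2.1 : ℤ) = ((U.1 i).2.2 : ℤ) - ((U.1 i).2.1 : ℤ)
    · -- same diagonal in the same diagram: combinatorial contradiction
      have hrne : (T.1 i).2.1 ≠ (U.1 i).2.1 := by
        intro h
        apply hi
        have hcols : (T.1 i).2.2 = (U.1 i).2.2 := by omega
        exact Prod.ext hk (Prod.ext h hcols)
      have key : ∀ (X Y : Tab m n S), (∀ j, j < i → X.1 j = Y.1 j) →
          (Y.1 i).1 = (X.1 i).1 → (X.1 i).2.1 < (Y.1 i).2.1 →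
          (X.1 i).2.2 < (Y.1 i).2.2 → False := by
        intro X Y hagree hk' hr hs
        obtain ⟨j, hj, hYj⟩ := (Y.2.1.2 i).2 (X.1 i).2.1 hr
        have hXj : X.1 j = ((Y.1 i).1, (X.1 i).2.1, (Y.1 i).2.2) := by
          rw [hagree j hj]; exact hYj
        obtain ⟨j2, hj2, hXj2⟩ := (X.2.1.2 j).1 (X.1 i).2.2 (by rw [hXj]; exact hs)
        have heq2 : X.1 j2 = X.1 i := by
          calc X.1 j2 = ((X.1 j).1, (X.1 j).2.1, (X.1 i).2.2) := hXj2
            _ = ((Y.1 i).1, (X.1 i).2.1, (X.1 i).2.2) := by rw [hXj]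
            _ = X.1 i := by rw [hk']
        have hj2i : j2 = i := X.2.1.1 heq2
        rw [hj2i] at hj2
        exact absurd hj (not_lt.mpr (le_of_lt hj2))
      rcases Nat.lt_or_ge (T.1 i).2.1 (U.1 i).2.1 with h | h
      · exact key T U hmin hk.symm h (by omega)
      · have h' : (U.1 i).2.1 < (T.1 i).2.1 := by omega
        exact key U T (fun j hj => (hmin j hj).symm) hk h' (by omega)
    · -- same diagram, different diagonals
      have haS' : T.1 i ∈ S := (Set.ext_iff.mp T.2.2 _).mp haS
      have hbS' : U.1 i ∈ S := (Set.ext_iff.mp T.2.2 _).mp hbS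
      have hq2 : q ^ (2 : ℕ) ≠ 1 := q_sq_ne_one hρ T haS' hbS' hi hk
      have hone : q ^ (2 * ((((T.1 i).2.2 : ℤ) - ((T.1 i).2.1 : ℤ)) -
          (((U.1 i).2.2 : ℤ) - ((U.1 i).2.1 : ℤ)))) = 1 := by
        rw [← hk] at hshift
        have hv' : v (T.1 i).1 ≠ 0 := hv _
        field_simp at hshift
        exact hshift
      have hb1 := count_bound T.2.1 haS hbS
      have hb2 := count_bound T.2.1 hbS haS
      rw [if_pos hk] at hb1
      rw [if_pos hk.symm] at hb2
      exact qzpow_ne_one hss.1 hq2 (sub_ne_zero.mpr hd) (by omega) hone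
  · -- different diagrams
    have hb1 := count_bound T.2.1 haS hbS
    have hb2 := count_bound T.2.1 hbS haS
    rw [if_neg hk] at hb1
    rw [if_neg (Ne.symm hk)] at hb2
    exact hss.2 (T.1 i).1 (U.1 i).1 hk _ (by omega) (by omega) hshift

end Alg3
section Alg4
variable {m n : ℕ} {q : ℂ} {v : Fin m → ℂ} {S : Set (Fin m × ℕ × ℕ)}
variable {ρ : CycHecke ℂ m n q q⁻¹ v →ₐ[ℂ] Module.End ℂ (Tab m n S →₀ ℂ)}

/-- The tableau obtained by exchanging the entries `i` and `i+1`. -/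
def swapTab (T : Tab m n S) {i : ℕ} (h : i + 1 < n)
    (hstd : IsStdTab m n (T.1 ∘ Equiv.swap ⟨i, Nat.lt_of_succ_lt h⟩ ⟨i + 1, h⟩)) :
    Tab m n S :=
  ⟨T.1 ∘ Equiv.swap ⟨i, Nat.lt_of_succ_lt h⟩ ⟨i + 1, h⟩, hstd, by
    rw [Set.range_comp, Equiv.range_eq_univ, Set.image_univ]; exact T.2.2⟩

open Classical in
lemma sig_apply (hρ : IsTabRep m n q v S ρ) (T : Tab m n S) (i : ℕ) (h : i + 1 < n) :
    ρ (sigN ℂ m n q q⁻¹ v i) (Finsupp.single T 1) =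
      (-((q - q⁻¹) * tabContent m n q v T.1 ⟨i + 1, h⟩ /
          (tabContent m n q v T.1 ⟨i, Nat.lt_of_succ_lt h⟩ -
            tabContent m n q v T.1 ⟨i + 1, h⟩))) • Finsupp.single T 1 +
      ((q * tabContent m n q v T.1 ⟨i + 1, h⟩ -
          q⁻¹ * tabContent m n q v T.1 ⟨i, Nat.lt_of_succ_lt h⟩) /
          (tabContent m n q v T.1 ⟨i + 1, h⟩ -
            tabContent m n q v T.1 ⟨i, Nat.lt_of_succ_lt h⟩)) •
        (if hstd : IsStdTab m n (T.1 ∘ Equiv.swap ⟨i, Nat.lt_of_succ_lt h⟩ ⟨i + 1, h⟩)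
         then Finsupp.single (swapTab T h hstd) 1
         else 0) :=
  hρ.2 T i h

lemma tabContent_ne_zero (hq : q ≠ 0) (hv : ∀ k, v k ≠ 0) (T : Fin n → Fin m × ℕ × ℕ)
    (i : Fin n) : tabContent m n q v T i ≠ 0 :=
  mul_ne_zero (hv _) (zpow_ne_zero _ hq)

lemma swapTab_content_left (T : Tab m n S) {i : ℕ} (h : i + 1 < n)
    (hstd : IsStdTab m n (T.1 ∘ Equiv.swap ⟨i, Nat.lt_of_succ_lt h⟩ ⟨i + 1, h⟩)) :
    tabContent m n q v (swapTab T h hstd).1 ⟨i, Nat.lt_of_succ_lt h⟩ =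
      tabContent m n q v T.1 ⟨i + 1, h⟩ := by
  unfold tabContent swapTab
  simp [Equiv.swap_apply_left]

lemma swapTab_content_right (T : Tab m n S) {i : ℕ} (h : i + 1 < n)
    (hstd : IsStdTab m n (T.1 ∘ Equiv.swap ⟨i, Nat.lt_of_succ_lt h⟩ ⟨i + 1, h⟩)) :
    tabContent m n q v (swapTab T h hstd).1 ⟨i + 1, h⟩ =
      tabContent m n q v T.1 ⟨i, Nat.lt_of_succ_lt h⟩ := by
  unfold tabContent swapTab
  simp [Equiv.swap_apply_right]

lemma swapTab_comp (T : Tab m n S) {i : ℕ} (h : i + 1 < n)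
    (hstd : IsStdTab m n (T.1 ∘ Equiv.swap ⟨i, Nat.lt_of_succ_lt h⟩ ⟨i + 1, h⟩)) :
    (swapTab T h hstd).1 ∘ Equiv.swap ⟨i, Nat.lt_of_succ_lt h⟩ ⟨i + 1, h⟩ = T.1 := by
  funext x
  simp [swapTab, Function.comp, Equiv.swap_apply_self]

lemma swapTab_swapTab (T : Tab m n S) {i : ℕ} (h : i + 1 < n)
    (hstd : IsStdTab m n (T.1 ∘ Equiv.swap ⟨i, Nat.lt_of_succ_lt h⟩ ⟨i + 1, h⟩))
    (hstd2 : IsStdTab m n ((swapTab T h hstd).1 ∘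
      Equiv.swap ⟨i, Nat.lt_of_succ_lt h⟩ ⟨i + 1, h⟩)) :
    swapTab (swapTab T h hstd) h hstd2 = T :=
  Subtype.ext (swapTab_comp T h hstd)

end Alg4
section Alg5
variable {m n : ℕ} {q : ℂ} {v : Fin m → ℂ} {S : Set (Fin m × ℕ × ℕ)}
variable {ρ : CycHecke ℂ m n q q⁻¹ v →ₐ[ℂ] Module.End ℂ (Tab m n S →₀ ℂ)}

lemma JM_diag (hq : q ≠ 0) (hv : ∀ k, v k ≠ 0) (hρ : IsTabRep m n q v S ρ) :
    ∀ (i : ℕ) (h : i < n) (T : Tab m n S),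
      ρ (JM ℂ m n q q⁻¹ v i) (Finsupp.single T 1)
        = tabContent m n q v T.1 ⟨i, h⟩ • Finsupp.single T 1 := by
  intro i
  induction i with
  | zero => intro h T; exact hρ.1 T h
  | succ i IH =>
    intro h T
    have hJM : JM ℂ m n q q⁻¹ v (i + 1)
        = sigN ℂ m n q q⁻¹ v i * JM ℂ m n q q⁻¹ v i * sigN ℂ m n q q⁻¹ v i := by
      simp only [JM]
    rw [hJM, map_mul, map_mul, Module.End.mul_apply, Module.End.mul_apply]
    have hin : i < n := Nat.lt_of_succ_lt h
    set c := tabContent m n q v T.1 ⟨i, hin⟩ with hcdef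
    set c' := tabContent m n q v T.1 ⟨i + 1, h⟩ with hc'def
    have hcne : c ≠ c' := content_adj_ne hρ T i h
    have hsub : c - c' ≠ 0 := sub_ne_zero.mpr hcne
    have hsub' : c' - c ≠ 0 := sub_ne_zero.mpr (Ne.symm hcne)
    by_cases hstd : IsStdTab m n (T.1 ∘ Equiv.swap ⟨i, Nat.lt_of_succ_lt h⟩ ⟨i + 1, h⟩)
    · -- the swapped tableau is standard
      set T' := swapTab T h hstd with hT'def
      have hT'c1 : tabContent m n q v T'.1 ⟨i, Nat.lt_of_succ_lt h⟩ = c' :=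
        swapTab_content_left T h hstd
      have hT'c2 : tabContent m n q v T'.1 ⟨i + 1, h⟩ = c :=
        swapTab_content_right T h hstd
      have hs1 : ρ (sigN ℂ m n q q⁻¹ v i) (Finsupp.single T 1) =
          (-((q - q⁻¹) * c' / (c - c'))) • Finsupp.single T 1 +
          ((q * c' - q⁻¹ * c) / (c' - c)) • Finsupp.single T' 1 := by
        rw [sig_apply hρ T i h, dif_pos hstd]
      have hcomp : T'.1 ∘ Equiv.swap ⟨i, Nat.lt_of_succ_lt h⟩ ⟨i + 1, h⟩ = T.1 :=
        swapTab_comp T h hstd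
      have hstd' : IsStdTab m n (T'.1 ∘ Equiv.swap ⟨i, Nat.lt_of_succ_lt h⟩ ⟨i + 1, h⟩) := by
        rw [hcomp]; exact T.2.1
      have hs2 : ρ (sigN ℂ m n q q⁻¹ v i) (Finsupp.single T' 1) =
          (-((q - q⁻¹) * c / (c' - c))) • Finsupp.single T' 1 +
          ((q * c - q⁻¹ * c') / (c - c')) • Finsupp.single T 1 := by
        rw [sig_apply hρ T' i h, dif_pos hstd', swapTab_swapTab T h hstd hstd',
          hT'c1, hT'c2]
      simp only [hs1, map_add, map_smul, IH hin, hT'c1, hT'c2, hs2]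
      match_scalars
      · field_simp
        ring
      · field_simp
        ring
    · -- the swapped tableau is not standard: entries are adjacent in a row or column
      have hadj : T.1 ⟨i + 1, h⟩ = ((T.1 ⟨i, hin⟩).1, (T.1 ⟨i, hin⟩).2.1,
            (T.1 ⟨i, hin⟩).2.2 + 1) ∨
          T.1 ⟨i + 1, h⟩ = ((T.1 ⟨i, hin⟩).1, (T.1 ⟨i, hin⟩).2.1 + 1,
            (T.1 ⟨i, hin⟩).2.2) := by
        by_contra hcon
        push_neg at hcon
        exact hstd (swap_std T.2.1 rfl hcon.1 hcon.2)
      have hs1 : ρ (sigN ℂ m n q q⁻¹ v i) (Finsupp.single T 1) =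
          (-((q - q⁻¹) * c' / (c - c'))) • Finsupp.single T 1 := by
        rw [sig_apply hρ T i h, dif_neg hstd, smul_zero, add_zero]
      simp only [hs1, map_smul, IH hin]
      have hq2 : q ^ (2 : ℤ) = q * q := by
        rw [show (2 : ℤ) = ((2 : ℕ) : ℤ) by norm_num, zpow_natCast]; ring
      rcases hadj with hrow | hcol
      · have hcq : c' = (q * q) * c := by
          rw [hc'def, hcdef]
          unfold tabContent
          rw [hrow]
          rw [show (2 * ((((T.1 ⟨i, hin⟩).2.2 + 1 : ℕ) : ℤ) - ((T.1 ⟨i, hin⟩).2.1 : ℤ)))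
              = 2 * (((T.1 ⟨i, hin⟩).2.2 : ℤ) - ((T.1 ⟨i, hin⟩).2.1 : ℤ)) + 2 by push_cast; ring]
          rw [zpow_add₀ hq, hq2]
          ring
        have hsubr := hsub
        rw [hcq] at hsubr
        have hα : -((q - q⁻¹) * c' / (c - c')) = q := by
          rw [hcq, ← neg_div, div_eq_iff hsubr]
          field_simp
          ring
        match_scalars
        simp only [← hcdef, ← hc'def]
        rw [hα, hcq]
        ring
      · have hcq2 : c = (q * q) * c' := by
          rw [hcdef, hc'def]
          unfold tabContent
          rw [hcol]
          rw [show (2 * (((T.1 ⟨i, hin⟩).2.2 : ℤ) - ((T.1 ⟨i, hin⟩).2.1 : ℤ)))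
              = 2 * ((((T.1 ⟨i, hin⟩).2.2 : ℕ) : ℤ) - (((T.1 ⟨i, hin⟩).2.1 + 1 : ℕ) : ℤ)) + 2
              by push_cast; ring]
          rw [zpow_add₀ hq, hq2]
          ring
        have hsubc := hsub
        rw [hcq2] at hsubc
        have hα : -((q - q⁻¹) * c' / (c - c')) = -q⁻¹ := by
          rw [hcq2, ← neg_div, div_eq_iff hsubc]
          field_simp
        match_scalars
        simp only [← hcdef, ← hc'def]
        rw [hα, hcq2]
        field_simp

end Alg5
section Alg6
variable {m n : ℕ} {q : ℂ} {v : Fin m → ℂ} {S : Set (Fin m × ℕ × ℕ)}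
variable {ρ : CycHecke ℂ m n q q⁻¹ v →ₐ[ℂ] Module.End ℂ (Tab m n S →₀ ℂ)}

lemma beta_ne (hq : q ≠ 0) (hv : ∀ k, v k ≠ 0) (hss : SSParams m n q v)
    (hρ : IsTabRep m n q v S ρ) (T : Tab m n S) (i : ℕ) (h : i + 1 < n)
    (hstd : IsStdTab m n (T.1 ∘ Equiv.swap ⟨i, Nat.lt_of_succ_lt h⟩ ⟨i + 1, h⟩)) :
    q * tabContent m n q v T.1 ⟨i + 1, h⟩
      - q⁻¹ * tabContent m n q v T.1 ⟨i, Nat.lt_of_succ_lt h⟩ ≠ 0 := by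
  intro h0
  set ii : Fin n := ⟨i, Nat.lt_of_succ_lt h⟩ with hiidef
  set i1 : Fin n := ⟨i + 1, h⟩ with hi1def
  have hc2 : q * tabContent m n q v T.1 i1 = q⁻¹ * tabContent m n q v T.1 ii :=
    sub_eq_zero.mp h0
  have hqc : v (T.1 i1).1 * q ^ (2 * ((((T.1 i1).2.2 : ℤ) - ((T.1 i1).2.1 : ℤ)) + 1))
      = v (T.1 ii).1 * q ^ (2 * (((T.1 ii).2.2 : ℤ) - ((T.1 ii).2.1 : ℤ))) := by
    have e1 : v (T.1 i1).1 * q ^ (2 * ((((T.1 i1).2.2 : ℤ) - ((T.1 i1).2.1 : ℤ)) + 1))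
        = q * (q * tabContent m n q v T.1 i1) := by
      rw [show (2 * ((((T.1 i1).2.2 : ℤ) - ((T.1 i1).2.1 : ℤ)) + 1))
          = 2 * (((T.1 i1).2.2 : ℤ) - ((T.1 i1).2.1 : ℤ)) + 2 by ring, zpow_add₀ hq]
      rw [show (2 : ℤ) = ((2 : ℕ) : ℤ) by norm_num, zpow_natCast]
      unfold tabContent
      ring
    rw [e1, hc2]
    unfold tabContent
    field_simp
  have hshift := content_shift hq hqc
  have haR : T.1 ii ∈ Set.range T.1 := ⟨ii, rfl⟩
  have hbR : T.1 i1 ∈ Set.range T.1 := ⟨i1, rfl⟩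
  have hb1 := count_bound T.2.1 haR hbR
  have hb2 := count_bound T.2.1 hbR haR
  by_cases hk : (T.1 i1).1 = (T.1 ii).1
  · -- same diagram
    rw [if_pos hk.symm] at hb1
    rw [if_pos hk] at hb2
    have hdne := diag_ne T.2.1 (show ((i1 : Fin n) : ℕ) = (ii : ℕ) + 1 from rfl) hstd hk
    have hone : q ^ (2 * ((((T.1 i1).2.2 : ℤ) - ((T.1 i1).2.1 : ℤ)) + 1
        - (((T.1 ii).2.2 : ℤ) - ((T.1 ii).2.1 : ℤ)))) = 1 := by
      rw [hk] at hshift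
      have := hv (T.1 ii).1
      field_simp at hshift
      exact hshift
    have hiine : ii ≠ i1 := by
      intro hh
      have : (ii : ℕ) = (i1 : ℕ) := by rw [hh]
      simp [hiidef, hi1def] at this
    have habne : T.1 ii ≠ T.1 i1 := fun hh => hiine (T.2.1.1 hh)
    have haS : T.1 ii ∈ S := (Set.ext_iff.mp T.2.2 _).mp haR
    have hbS : T.1 i1 ∈ S := (Set.ext_iff.mp T.2.2 _).mp hbR
    have hq2 := q_sq_ne_one hρ T haS hbS habne hk.symm
    exact qzpow_ne_one hss.1 hq2 (by omega) (by omega) hone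
  · -- different diagrams
    rw [if_neg (fun hh => hk hh.symm)] at hb1
    rw [if_neg hk] at hb2
    exact hss.2 (T.1 i1).1 (T.1 ii).1 hk _ (by omega) (by omega) hshift

open Classical in
lemma step_mem (hq : q ≠ 0) (hv : ∀ k, v k ≠ 0) (hss : SSParams m n q v)
    (hρ : IsTabRep m n q v S ρ) (W : Submodule ℂ (Tab m n S →₀ ℂ))
    (hW : ∀ a : CycHecke ℂ m n q q⁻¹ v, ∀ x ∈ W, ρ a x ∈ W)
    (T : Tab m n S) (i : ℕ) (h : i + 1 < n)
    (hstd : IsStdTab m n (T.1 ∘ Equiv.swap ⟨i, Nat.lt_of_succ_lt h⟩ ⟨i + 1, h⟩))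
    (hT : Finsupp.single T (1 : ℂ) ∈ W) :
    Finsupp.single (swapTab T h hstd) (1 : ℂ) ∈ W := by
  have hσ := sig_apply hρ T i h
  rw [dif_pos hstd] at hσ
  set c := tabContent m n q v T.1 ⟨i, Nat.lt_of_succ_lt h⟩ with hcdef
  set c' := tabContent m n q v T.1 ⟨i + 1, h⟩ with hc'def
  set α := -((q - q⁻¹) * c' / (c - c')) with hα
  set β := (q * c' - q⁻¹ * c) / (c' - c) with hβ
  have hβne : β ≠ 0 := div_ne_zero (beta_ne hq hv hss hρ T i h hstd)
    (sub_ne_zero.mpr (Ne.symm (content_adj_ne hρ T i h)))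
  have h1 : β • Finsupp.single (swapTab T h hstd) (1 : ℂ)
      = ρ (sigN ℂ m n q q⁻¹ v i) (Finsupp.single T 1) - α • Finsupp.single T 1 := by
    rw [hσ, add_sub_cancel_left]
  have h2 : β • Finsupp.single (swapTab T h hstd) (1 : ℂ) ∈ W := by
    rw [h1]
    exact sub_mem (hW _ _ hT) (Submodule.smul_mem W α hT)
  have h3 := Submodule.smul_mem W β⁻¹ h2
  rwa [smul_smul, inv_mul_cancel₀ hβne, one_smul] at h3

open Classical in
lemma step_mem' (hq : q ≠ 0) (hv : ∀ k, v k ≠ 0) (hss : SSParams m n q v)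
    (hρ : IsTabRep m n q v S ρ) (W : Submodule ℂ (Tab m n S →₀ ℂ))
    (hW : ∀ a : CycHecke ℂ m n q q⁻¹ v, ∀ x ∈ W, ρ a x ∈ W)
    (T : Tab m n S) (i : ℕ) (h : i + 1 < n)
    (hstd : IsStdTab m n (T.1 ∘ Equiv.swap ⟨i, Nat.lt_of_succ_lt h⟩ ⟨i + 1, h⟩))
    (hT : Finsupp.single (swapTab T h hstd) (1 : ℂ) ∈ W) :
    Finsupp.single T (1 : ℂ) ∈ W := by
  have hstd2 : IsStdTab m n ((swapTab T h hstd).1 ∘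
      Equiv.swap ⟨i, Nat.lt_of_succ_lt h⟩ ⟨i + 1, h⟩) := by
    rw [swapTab_comp]; exact T.2.1
  have := step_mem hq hv hss hρ W hW (swapTab T h hstd) i h hstd2 hT
  rwa [swapTab_swapTab] at this

lemma diag_apply (hq : q ≠ 0) (hv : ∀ k, v k ≠ 0) (hρ : IsTabRep m n q v S ρ)
    (i : ℕ) (h : i < n) (x : Tab m n S →₀ ℂ) (V : Tab m n S) :
    (ρ (JM ℂ m n q q⁻¹ v i) x) V = tabContent m n q v V.1 ⟨i, h⟩ * x V := by
  classical
  induction x using Finsupp.induction_linear with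
  | zero => simp
  | add f g hf hg => rw [map_add, Finsupp.add_apply, hf, hg, Finsupp.add_apply]; ring
  | single a b =>
    have hab : Finsupp.single a b = b • Finsupp.single a (1 : ℂ) := by
      rw [Finsupp.smul_single, smul_eq_mul, mul_one]
    rw [hab, map_smul, JM_diag hq hv hρ i h a, Finsupp.smul_apply, Finsupp.smul_apply,
      smul_eq_mul, smul_eq_mul, Finsupp.smul_apply, smul_eq_mul]
    by_cases hav : a = V
    · subst hav; simp [Finsupp.single_eq_same]; ring
    · simp [Finsupp.single_eq_of_ne' hav]

lemma get_single (hq : q ≠ 0) (hv : ∀ k, v k ≠ 0) (hss : SSParams m n q v)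
    (hρ : IsTabRep m n q v S ρ) (W : Submodule ℂ (Tab m n S →₀ ℂ))
    (hW : ∀ a : CycHecke ℂ m n q q⁻¹ v, ∀ x ∈ W, ρ a x ∈ W)
    (x : Tab m n S →₀ ℂ) (hx : x ∈ W) (hx0 : x ≠ 0) :
    ∃ T : Tab m n S, Finsupp.single T (1 : ℂ) ∈ W := by
  classical
  suffices claim : ∀ N : ℕ, ∀ x : Tab m n S →₀ ℂ, x ∈ W → x ≠ 0 → x.support.card ≤ N →
      ∃ T : Tab m n S, Finsupp.single T (1 : ℂ) ∈ W from
    claim x.support.card x hx hx0 le_rfl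
  intro N
  induction N with
  | zero =>
    intro x hx hx0 hcard
    exact absurd (Finsupp.support_eq_empty.mp (Finset.card_eq_zero.mp (by omega))) hx0
  | succ N IHN =>
    intro x hx hx0 hcard
    by_cases h1 : x.support.card = 1
    · obtain ⟨T, hb, hxs⟩ := Finsupp.card_support_eq_one.mp h1
      refine ⟨T, ?_⟩
      have hrw : Finsupp.single T (1 : ℂ) = (x T)⁻¹ • x := by
        nth_rewrite 2 [hxs]
        rw [Finsupp.smul_single, smul_eq_mul, inv_mul_cancel₀ hb]
      rw [hrw]
      exact Submodule.smul_mem W _ hx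
    · have h2 : 1 < x.support.card := by
        have : x.support.card ≠ 0 := fun hh =>
          hx0 (Finsupp.support_eq_empty.mp (Finset.card_eq_zero.mp hh))
        omega
      obtain ⟨T, hTm, U, hUm, hTU⟩ := Finset.one_lt_card.mp h2
      obtain ⟨io, hio⟩ := content_sep hq hv hss hρ T U hTU
      set y := ρ (JM ℂ m n q q⁻¹ v (io : ℕ)) x - tabContent m n q v U.1 io • x with hy
      have hyW : y ∈ W := sub_mem (hW _ _ hx) (Submodule.smul_mem _ _ hx)
      have hda : ∀ V : Tab m n S, (ρ (JM ℂ m n q q⁻¹ v (io : ℕ)) x) V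
          = tabContent m n q v V.1 io * x V := fun V =>
        diag_apply hq hv hρ io.1 io.isLt x V
      have hyapp : ∀ V, y V = (tabContent m n q v V.1 io - tabContent m n q v U.1 io) * x V := by
        intro V
        rw [hy, Finsupp.sub_apply, Finsupp.smul_apply, hda V, smul_eq_mul]
        ring
      have hyT : y T ≠ 0 := by
        rw [hyapp]
        exact mul_ne_zero (sub_ne_zero.mpr hio) (Finsupp.mem_support_iff.mp hTm)
      have hy0 : y ≠ 0 := fun hh => hyT (by rw [hh]; rfl)
      have hysub : y.support ⊆ x.support.erase U := by
        intro V hV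
        have hyV := Finsupp.mem_support_iff.mp hV
        rw [Finset.mem_erase]
        constructor
        · intro hVU
          rw [hVU] at hyV
          exact hyV (by rw [hyapp U, sub_self, zero_mul])
        · rw [Finsupp.mem_support_iff]
          intro hxV
          exact hyV (by rw [hyapp, hxV, mul_zero])
      have hcard2 : y.support.card ≤ N := by
        have hle := Finset.card_le_card hysub
        have her := Finset.card_erase_of_mem hUm
        omega
      exact IHN y hyW hy0 hcard2

end Alg6
section Comb4
variable {m n : ℕ} {S : Set (Fin m × ℕ × ℕ)}

/-- Lexicographic embedding of nodes. -/
def nodeEmb {m : ℕ} (x : Fin m × ℕ × ℕ) : Lex (Fin m × Lex (ℕ × ℕ)) :=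
  toLex (x.1, toLex (x.2.1, x.2.2))

lemma nodeEmb_injective {m : ℕ} : Function.Injective (nodeEmb (m := m)) := by
  intro x y hxy
  unfold nodeEmb at hxy
  have h1 := congrArg (fun z => (ofLex z).1) hxy
  have h2 := congrArg (fun z => (ofLex (ofLex z).2).1) hxy
  have h3 := congrArg (fun z => (ofLex (ofLex z).2).2) hxy
  simp at h1 h2 h3
  exact Prod.ext h1 (Prod.ext h2 h3)

open Classical in
/-- Number of inversions of a tableau relative to the lexicographic node order. -/
noncomputable def invCount (T : Tab m n S) : ℕ :=
  (Finset.univ.filter (fun p : Fin n × Fin n =>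
    p.1 < p.2 ∧ nodeEmb (T.1 p.2) < nodeEmb (T.1 p.1))).card

open Classical in
lemma descent_of_invCount_ne (T : Tab m n S) (hT : invCount T ≠ 0) :
    ∃ (i : ℕ) (hh : i + 1 < n),
      nodeEmb (T.1 ⟨i + 1, hh⟩) < nodeEmb (T.1 ⟨i, Nat.lt_of_succ_lt hh⟩) := by
  have hne : (Finset.univ.filter (fun p : Fin n × Fin n =>
      p.1 < p.2 ∧ nodeEmb (T.1 p.2) < nodeEmb (T.1 p.1))).Nonempty := by
    rw [Finset.nonempty_iff_ne_empty]
    intro hh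
    exact hT (by rw [invCount, hh, Finset.card_empty])
  obtain ⟨p, hp⟩ := hne
  rw [Finset.mem_filter] at hp
  obtain ⟨-, hp1, hp2⟩ := hp
  have key : ∀ g : ℕ, ∀ p1 p2 : Fin n, (p2 : ℕ) = (p1 : ℕ) + g → 0 < g →
      nodeEmb (T.1 p2) < nodeEmb (T.1 p1) →
      ∃ (i : ℕ) (hh : i + 1 < n),
        nodeEmb (T.1 ⟨i + 1, hh⟩) < nodeEmb (T.1 ⟨i, Nat.lt_of_succ_lt hh⟩) := by
    intro g
    induction g using Nat.strong_induction_on with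
    | _ g IH =>
      intro p1 p2 hgap hg hlt
      rcases Nat.eq_or_lt_of_le hg with h1 | h2
      · have hh : (p1 : ℕ) + 1 < n := by have := p2.isLt; omega
        refine ⟨(p1 : ℕ), hh, ?_⟩
        rw [show (⟨(p1 : ℕ) + 1, hh⟩ : Fin n) = p2 from Fin.ext (show (p1 : ℕ) + 1 = (p2 : ℕ) by omega),
          show (⟨(p1 : ℕ), Nat.lt_of_succ_lt hh⟩ : Fin n) = p1 from Fin.ext rfl]
        exact hlt
      · set pm : Fin n := ⟨(p1 : ℕ) + 1, by have := p2.isLt; omega⟩ with hpm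
        rcases lt_or_ge (nodeEmb (T.1 pm)) (nodeEmb (T.1 p1)) with hc | hc
        · exact IH 1 (by omega) p1 pm rfl one_pos hc
        · exact IH (g - 1) (by omega) pm p2
            (show (p2 : ℕ) = (p1 : ℕ) + 1 + (g - 1) by omega) (by omega)
            (lt_of_lt_of_le hlt hc)
  have hgap : (p.2 : ℕ) = (p.1 : ℕ) + ((p.2 : ℕ) - (p.1 : ℕ)) := by
    have : (p.1 : ℕ) < (p.2 : ℕ) := hp1
    omega
  exact key _ p.1 p.2 hgap (by have : (p.1 : ℕ) < (p.2 : ℕ) := hp1; omega) hp2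

lemma descent_swap_std (T : Tab m n S) (i : ℕ) (h : i + 1 < n)
    (hdesc : nodeEmb (T.1 ⟨i + 1, h⟩) < nodeEmb (T.1 ⟨i, Nat.lt_of_succ_lt h⟩)) :
    IsStdTab m n (T.1 ∘ Equiv.swap ⟨i, Nat.lt_of_succ_lt h⟩ ⟨i + 1, h⟩) := by
  refine swap_std T.2.1 rfl ?_ ?_
  · intro heq
    refine absurd hdesc (lt_asymm ?_)
    rw [heq]
    unfold nodeEmb
    rw [Prod.Lex.lt_iff]
    exact Or.inr ⟨rfl, by rw [Prod.Lex.lt_iff]; exact Or.inr ⟨rfl, Nat.lt_succ_self _⟩⟩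
  · intro heq
    refine absurd hdesc (lt_asymm ?_)
    rw [heq]
    unfold nodeEmb
    rw [Prod.Lex.lt_iff]
    exact Or.inr ⟨rfl, by rw [Prod.Lex.lt_iff]; exact Or.inl (Nat.lt_succ_self _)⟩

open Classical in
lemma invCount_swap_lt (T : Tab m n S) (i : ℕ) (h : i + 1 < n)
    (hstd : IsStdTab m n (T.1 ∘ Equiv.swap ⟨i, Nat.lt_of_succ_lt h⟩ ⟨i + 1, h⟩))
    (hdesc : nodeEmb (T.1 ⟨i + 1, h⟩) < nodeEmb (T.1 ⟨i, Nat.lt_of_succ_lt h⟩)) :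
    invCount (swapTab T h hstd) < invCount T := by
  set ii : Fin n := ⟨i, Nat.lt_of_succ_lt h⟩ with hiidef
  set i1 : Fin n := ⟨i + 1, h⟩ with hi1def
  have hval1 : (ii : ℕ) = i := rfl
  have hval2 : (i1 : ℕ) = i + 1 := rfl
  set PT := Finset.univ.filter (fun p : Fin n × Fin n =>
    p.1 < p.2 ∧ nodeEmb (T.1 p.2) < nodeEmb (T.1 p.1)) with hPT
  set PT' := Finset.univ.filter (fun p : Fin n × Fin n =>
    p.1 < p.2 ∧ nodeEmb ((swapTab T h hstd).1 p.2) < nodeEmb ((swapTab T h hstd).1 p.1)) with hPT'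
  have hmem : (ii, i1) ∈ PT := by
    rw [hPT, Finset.mem_filter]
    exact ⟨Finset.mem_univ _, show ii < i1 by rw [Fin.lt_def]; omega, hdesc⟩
  have happ : ∀ x : Fin n, (swapTab T h hstd).1 x = T.1 (Equiv.swap ii i1 x) := fun x => rfl
  have hswlt : ∀ a b : Fin n, a < b → (a, b) ≠ (ii, i1) →
      Equiv.swap ii i1 a < Equiv.swap ii i1 b := by
    intro a b hab hne
    have hv1 : ∀ x : Fin n, x ≠ ii → x ≠ i1 → Equiv.swap ii i1 x = x :=
      fun x h1 h2 => Equiv.swap_apply_of_ne_of_ne h1 h2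
    rw [Fin.lt_def] at hab ⊢
    by_cases ha1 : a = ii
    · have hb : b ≠ i1 := fun hh => hne (by rw [ha1, hh])
      have hbii : b ≠ ii := fun hh => by rw [ha1, hh] at hab; omega
      rw [ha1, Equiv.swap_apply_left, hv1 b hbii hb]
      have h1 : (b : ℕ) ≠ (i1 : ℕ) := fun hh => hb (Fin.ext hh)
      have h2 : (ii : ℕ) < (b : ℕ) := by rw [ha1] at hab; exact hab
      omega
    · by_cases ha2 : a = i1
      · have hbii : b ≠ ii := fun hh => by
          rw [ha2, hh] at hab; omega
        have hbi1 : b ≠ i1 := fun hh => by rw [ha2, hh] at hab; omega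
        rw [ha2, Equiv.swap_apply_right, hv1 b hbii hbi1]
        have : (i1 : ℕ) < (b : ℕ) := by rw [ha2] at hab; exact hab
        omega
      · rw [hv1 a ha1 ha2]
        by_cases hb1 : b = ii
        · rw [hb1, Equiv.swap_apply_left]
          have : (a : ℕ) < (ii : ℕ) := by rw [hb1] at hab; exact hab
          omega
        · by_cases hb2 : b = i1
          · rw [hb2, Equiv.swap_apply_right]
            have h1 : (a : ℕ) < (i1 : ℕ) := by rw [hb2] at hab; exact hab
            have h2 : (a : ℕ) ≠ (ii : ℕ) := fun hh => ha1 (Fin.ext hh)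
            omega
          · rw [hv1 b hb1 hb2]
            exact hab
  have hmaps : ∀ p ∈ PT', (Equiv.swap ii i1 p.1, Equiv.swap ii i1 p.2) ∈ PT.erase (ii, i1) := by
    intro p hp
    rw [hPT', Finset.mem_filter] at hp
    obtain ⟨-, hp1, hp2⟩ := hp
    have hpne : p ≠ (ii, i1) := by
      intro hh
      rw [hh] at hp2
      simp only [happ] at hp2
      rw [Equiv.swap_apply_left, Equiv.swap_apply_right] at hp2
      exact absurd hdesc (lt_asymm hp2)
    rw [Finset.mem_erase]
    constructor
    · intro hh
      have h1 : Equiv.swap ii i1 p.1 = ii := congrArg Prod.fst hh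
      have h2 : Equiv.swap ii i1 p.2 = i1 := congrArg Prod.snd hh
      have h1' : p.1 = i1 := by
        have := congrArg (Equiv.swap ii i1) h1
        rwa [Equiv.swap_apply_self, Equiv.swap_apply_left] at this
      have h2' : p.2 = ii := by
        have := congrArg (Equiv.swap ii i1) h2
        rwa [Equiv.swap_apply_self, Equiv.swap_apply_right] at this
      rw [Fin.lt_def, h1', h2'] at hp1
      omega
    · rw [hPT, Finset.mem_filter]
      refine ⟨Finset.mem_univ _, hswlt p.1 p.2 hp1 hpne, ?_⟩
      simp only [happ] at hp2
      exact hp2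
  have hinj : Set.InjOn (fun p : Fin n × Fin n => (Equiv.swap ii i1 p.1, Equiv.swap ii i1 p.2))
      PT' := by
    intro p _ p' _ hpp
    have h1 := congrArg Prod.fst hpp
    have h2 := congrArg Prod.snd hpp
    simp only at h1 h2
    exact Prod.ext ((Equiv.swap ii i1).injective h1) ((Equiv.swap ii i1).injective h2)
  have hcard := Finset.card_le_card_of_injOn _ hmaps hinj
  have her : (PT.erase (ii, i1)).card = PT.card - 1 := Finset.card_erase_of_mem hmem
  have hpos : 0 < PT.card := Finset.card_pos.mpr ⟨_, hmem⟩
  show PT'.card < PT.card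
  omega

lemma invCount_zero_unique (T U : Tab m n S) (hT : invCount T = 0) (hU : invCount U = 0) :
    T = U := by
  classical
  have hmono : ∀ V : Tab m n S, invCount V = 0 → StrictMono (fun x => nodeEmb (V.1 x)) := by
    intro V hV a b hab
    have hnot : ¬ nodeEmb (V.1 b) < nodeEmb (V.1 a) := by
      intro hlt
      have : (a, b) ∈ Finset.univ.filter (fun p : Fin n × Fin n =>
          p.1 < p.2 ∧ nodeEmb (V.1 p.2) < nodeEmb (V.1 p.1)) :=
        Finset.mem_filter.mpr ⟨Finset.mem_univ _, hab, hlt⟩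
      rw [Finset.card_eq_zero.mp hV] at this
      exact absurd this (Finset.notMem_empty _)
    rcases lt_or_eq_of_le (not_lt.mp hnot) with h | h
    · exact h
    · exact absurd (V.2.1.1 (nodeEmb_injective h)) (ne_of_lt hab)
  have hrange : Set.range (fun x => nodeEmb (T.1 x)) = Set.range (fun x => nodeEmb (U.1 x)) := by
    have h1 : Set.range (fun x => nodeEmb (T.1 x)) = nodeEmb '' S := by
      rw [show (fun x => nodeEmb (T.1 x)) = nodeEmb ∘ T.1 from rfl, Set.range_comp, T.2.2]
    have h2 : Set.range (fun x => nodeEmb (U.1 x)) = nodeEmb '' S := by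
      rw [show (fun x => nodeEmb (U.1 x)) = nodeEmb ∘ U.1 from rfl, Set.range_comp, U.2.2]
    rw [h1, h2]
  haveI : WellFoundedLT (Fin n) := Finite.to_wellFoundedLT
  have := (StrictMono.range_inj (f := fun x => nodeEmb (T.1 x))
    (g := fun x => nodeEmb (U.1 x)) (hmono T hT) (hmono U hU)).mp hrange
  refine Subtype.ext (funext fun x => ?_)
  exact nodeEmb_injective (congrFun this x)

end Comb4
/-- For every `m`-partition `λ` of length `n` (encoded by its
set `S` of nodes), the representation `V_λ` of `H(m,1,n)` is irreducible: the
space is nonzero and has no proper nonzero invariant subspace. -/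
theorem tab_rep_irreducible (m n : ℕ) (hn : 0 < n)
    (q : ℂ) (hq : q ≠ 0) (v : Fin m → ℂ) (hv : ∀ k, v k ≠ 0) (hss : SSParams m n q v)
    (S : Set (Fin m × ℕ × ℕ)) (hS : ∃ T, IsStdTab m n T ∧ Set.range T = S)
    (ρ : CycHecke ℂ m n q q⁻¹ v →ₐ[ℂ] Module.End ℂ (Tab m n S →₀ ℂ))
    (hρ : IsTabRep m n q v S ρ) :
    Nontrivial (Tab m n S →₀ ℂ) ∧
    ∀ W : Submodule ℂ (Tab m n S →₀ ℂ),
      (∀ a : CycHecke ℂ m n q q⁻¹ v, ∀ x ∈ W, ρ a x ∈ W) → W = ⊥ ∨ W = ⊤ := by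
  obtain ⟨T₀f, hT₀1, hT₀2⟩ := hS
  have T₀ : Tab m n S := ⟨T₀f, hT₀1, hT₀2⟩
  constructor
  · exact ⟨Finsupp.single T₀ 1, 0, fun hh => one_ne_zero (Finsupp.single_eq_zero.mp hh)⟩
  · intro W hW
    by_cases hbot : W = ⊥
    · left; exact hbot
    right
    obtain ⟨x, hxW, hx0⟩ := (Submodule.ne_bot_iff W).mp hbot
    obtain ⟨T, hT⟩ := get_single hq hv hss hρ W hW x hxW hx0
    have connA : ∀ N : ℕ, ∀ T : Tab m n S, invCount T ≤ N → Finsupp.single T (1 : ℂ) ∈ W →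
        ∃ T0 : Tab m n S, invCount T0 = 0 ∧ Finsupp.single T0 (1 : ℂ) ∈ W := by
      intro N
      induction N with
      | zero => intro T hc hT; exact ⟨T, Nat.le_zero.mp hc, hT⟩
      | succ N IH =>
        intro T hc hT
        by_cases h0 : invCount T = 0
        · exact ⟨T, h0, hT⟩
        · obtain ⟨i, hh, hdesc⟩ := descent_of_invCount_ne T h0
          have hstd := descent_swap_std T i hh hdesc
          have hT' := step_mem hq hv hss hρ W hW T i hh hstd hT
          have hlt := invCount_swap_lt T i hh hstd hdesc
          exact IH (swapTab T hh hstd) (by omega) hT'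
    have connB : ∀ N : ℕ, ∀ U : Tab m n S, invCount U ≤ N →
        (∃ T0 : Tab m n S, invCount T0 = 0 ∧ Finsupp.single T0 (1 : ℂ) ∈ W) →
        Finsupp.single U (1 : ℂ) ∈ W := by
      intro N
      induction N with
      | zero =>
        rintro U hc ⟨T0, h00, hT0⟩
        rwa [invCount_zero_unique U T0 (Nat.le_zero.mp hc) h00]
      | succ N IH =>
        intro U hc h0ex
        by_cases h0 : invCount U = 0
        · obtain ⟨T0, h00, hT0⟩ := h0ex
          rwa [invCount_zero_unique U T0 h0 h00]
        · obtain ⟨i, hh, hdesc⟩ := descent_of_invCount_ne U h0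
          have hstd := descent_swap_std U i hh hdesc
          have hlt := invCount_swap_lt U i hh hstd hdesc
          have hU' := IH (swapTab U hh hstd) (by omega) h0ex
          exact step_mem' hq hv hss hρ W hW U i hh hstd hU'
    have hall : ∀ U : Tab m n S, Finsupp.single U (1 : ℂ) ∈ W :=
      fun U => connB (invCount U) U le_rfl (connA (invCount T) T le_rfl hT)
    rw [Submodule.eq_top_iff']
    intro y
    have hy : y = y.sum (fun U b => Finsupp.single U b) := (Finsupp.sum_single y).symm
    rw [hy]
    refine Submodule.finsuppSum_mem ℂ W y _ (fun U _ => ?_)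
    have : Finsupp.single U (y U) = (y U) • Finsupp.single U (1 : ℂ) := by
      rw [Finsupp.smul_single, smul_eq_mul, mul_one]
    rw [this]
    exact Submodule.smul_mem W _ (hall U)
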